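/- Let R be a commutative ring, r a unit of R, and A an associative unital R-algebra. Suppose A₊ is an invertible element of A and A₋ ∈ A satisfies the r-Heisenberg-Weyl relation r·A₋·A₊ − r⁻¹·A₊·A₋ = 1. For each m ∈ ℤ define L_m := −A₊^{1+m}·A₋ (using integer powers of the invertible element A₊). Then for all m, n ∈ ℤ the r-Witt (deformed centreless Virasoro) relation holds: r^{n−m}·L_m·L_n − r^{m−n}·L_n·L_m = [m−n]_r·L_{m+n}, where [k]_r denotes the r-integer for k ∈ ℤ (with [−k]_r = −[k]_r). -/

import Mathlib

/-- The `r`-integer `[n]_r = ∑_{i=1}^{n} r^{n+1-2i}` for a unit `r` of a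
commutative ring `R` and a natural number `n`. -/
def qInt {R : Type*} [CommRing R] (r : Rˣ) (n : ℕ) : R :=
  ∑ i ∈ Finset.range n, ((r ^ ((n : ℤ) - 1 - 2 * (i : ℤ)) : Rˣ) : R)

/-- The `r`-integer `[k]_r` for `k ∈ ℤ`, with `[-k]_r = -[k]_r`. -/
def zInt {R : Type*} [CommRing R] (r : Rˣ) : ℤ → R
  | Int.ofNat n => qInt r n
  | Int.negSucc n => - qInt r (n + 1)

/-- The generator `L_m = -A₊^{1+m}·A₋` of the `r`-Witt algebra realised inside
the (extended) `r`-Heisenberg-Weyl algebra. -/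
def wittL {A : Type*} [Ring A] (Ap : Aˣ) (Am : A) (m : ℤ) : A :=
  -(((Ap ^ (1 + m) : Aˣ) : A) * Am)

section Aux

variable {R : Type*} [CommRing R] (r : Rˣ)

lemma rpow_add (a b : ℤ) : ((r ^ (a + b) : Rˣ) : R) = ((r ^ a : Rˣ) : R) * ((r ^ b : Rˣ) : R) := by
  rw [zpow_add, Units.val_mul]

lemma qInt_succ (n : ℕ) :
    qInt r (n + 1) = (r : R) * qInt r n + ((r ^ (-(n:ℤ)) : Rˣ) : R) := by
  rw [qInt, Finset.sum_range_succ, qInt, Finset.mul_sum]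
  congr 1
  · apply Finset.sum_congr rfl
    intro i _
    have : ((n:ℤ)+1) - 1 - 2*(i:ℤ) = 1 + ((n:ℤ) - 1 - 2*i) := by ring
    push_cast
    rw [this, zpow_add, Units.val_mul, zpow_one]
  · congr 1
    push_cast
    ring

lemma qInt_succ' (n : ℕ) :
    qInt r (n + 1) = ((r⁻¹ : Rˣ) : R) * qInt r n + ((r ^ (n:ℤ) : Rˣ) : R) := by
  rw [qInt, Finset.sum_range_succ', qInt, Finset.mul_sum]
  congr 1
  · apply Finset.sum_congr rfl
    intro i _
    have : ((n:ℤ)+1) - 1 - 2*((i:ℤ)+1) = -1 + ((n:ℤ) - 1 - 2*i) := by ring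
    push_cast
    rw [this, zpow_add, Units.val_mul, zpow_neg_one]
  · congr 1
    push_cast
    ring

lemma zInt_zero : zInt r 0 = 0 := by
  show qInt r 0 = 0
  simp [qInt]

lemma zInt_neg_natCast (n : ℕ) : zInt r (-(n:ℤ)) = - qInt r n := by
  cases n with
  | zero => simp [zInt_zero, zInt]; simp [qInt]
  | succ m => show zInt r (Int.negSucc m) = _; rfl

lemma zInt_add_one (k : ℤ) :
    zInt r (k + 1) = (r : R) * zInt r k + ((r ^ (-k) : Rˣ) : R) := by
  cases k with
  | ofNat n =>
    show zInt r ((n:ℤ) + 1) = _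
    have h1 : ((n:ℤ) + 1) = ((n+1 : ℕ) : ℤ) := by push_cast; ring
    rw [h1]
    show qInt r (n+1) = (r:R) * qInt r n + _
    exact qInt_succ r n
  | negSucc n =>
    have h1 : (Int.negSucc n) + 1 = -(n:ℤ) := by rw [Int.negSucc_eq]; ring
    rw [h1, zInt_neg_natCast]
    show _ = (r:R) * (- qInt r (n+1)) + ((r ^ (-(Int.negSucc n)) : Rˣ) : R)
    have h2 : -(Int.negSucc n) = ((n:ℤ) + 1) := by rw [Int.negSucc_eq]; ring
    rw [h2, qInt_succ' r n]
    have hr : (r:R) * ((r⁻¹:Rˣ):R) = 1 := by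
      rw [← Units.val_mul, mul_inv_cancel, Units.val_one]
    have h3 : ((r ^ ((n:ℤ)+1) : Rˣ):R) = (r:R) * ((r^(n:ℤ):Rˣ):R) := by
      rw [add_comm, zpow_add, zpow_one, Units.val_mul]
    rw [h3]
    linear_combination (qInt r n) * hr

lemma zInt_neg (k : ℤ) : zInt r (-k) = - zInt r k := by
  cases k with
  | ofNat n => exact zInt_neg_natCast r n
  | negSucc n =>
    have h : -(Int.negSucc n) = ((n+1:ℕ):ℤ) := by rw [Int.negSucc_eq]; push_cast; ring
    rw [h]
    show qInt r (n+1) = - zInt r (Int.negSucc n)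
    show qInt r (n+1) = - (- qInt r (n+1))
    ring

lemma zInt_sub_one (k : ℤ) :
    zInt r (k - 1) = ((r⁻¹:Rˣ) : R) * zInt r k - ((r ^ (-k) : Rˣ) : R) := by
  have h := zInt_add_one r (k - 1)
  rw [sub_add_cancel] at h
  have hr : ((r⁻¹:Rˣ):R) * (r:R) = 1 := by
    rw [← Units.val_mul, inv_mul_cancel, Units.val_one]
  have h2 : ((r ^ (-(k-1)) : Rˣ) : R) = ((r⁻¹:Rˣ):R) * ((r ^ (-k+2) : Rˣ):R) := by
    have : -(k-1) = -1 + (-k+2) := by ring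
    rw [this, zpow_add, Units.val_mul, zpow_neg_one]
  have h3 : ((r ^ (-k+2) : Rˣ) : R) = ((r ^ (-k) : Rˣ):R) * (r:R) * (r:R) := by
    have : -k+2 = -k + 1 + 1 := by ring
    rw [this, zpow_add, zpow_add, Units.val_mul, Units.val_mul, zpow_one]
  rw [h2, h3] at h
  linear_combination (-((r⁻¹:Rˣ):R)) * h + (-(zInt r (k-1)) - ((r^(-k):Rˣ):R) * (((r⁻¹:Rˣ):R)*(r:R) + 1)) * hr

lemma zInt_add (a : ℤ) : ∀ b : ℤ,
    zInt r (a + b) = ((r ^ b : Rˣ) : R) * zInt r a + ((r ^ (-a) : Rˣ) : R) * zInt r b := by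
  intro b
  induction b using Int.induction_on with
  | zero => simp [zInt_zero]
  | succ n ih =>
    have h1 : a + ((n:ℤ) + 1) = (a + n) + 1 := by ring
    rw [h1, zInt_add_one, ih, zInt_add_one]
    have h2 : ((r ^ (-(a + (n:ℤ))) : Rˣ) : R) = ((r ^ (-a) : Rˣ):R) * ((r ^ (-(n:ℤ)) : Rˣ):R) := by
      rw [← Units.val_mul, ← zpow_add]; congr 1; ring
    have h3 : ((r ^ ((n:ℤ)+1) : Rˣ) : R) = (r:R) * ((r ^ (n:ℤ) : Rˣ):R) := by
      rw [add_comm, zpow_add, zpow_one, Units.val_mul]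
    rw [h2, h3]; ring
  | pred n ih =>
    have h1 : a + (-(n:ℤ) - 1) = (a + -n) - 1 := by ring
    rw [h1, zInt_sub_one, ih, zInt_sub_one]
    have h2 : ((r ^ (-(a + -(n:ℤ))) : Rˣ) : R) = ((r ^ (-a) : Rˣ):R) * ((r ^ ((n:ℤ)) : Rˣ):R) := by
      rw [← Units.val_mul, ← zpow_add]; congr 1; ring
    have h3 : ((r ^ (-(n:ℤ)-1) : Rˣ) : R) = ((r⁻¹:Rˣ):R) * ((r ^ (-(n:ℤ)) : Rˣ):R) := by
      rw [← zpow_neg_one, ← Units.val_mul, ← zpow_add]; congr 1; ring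
    have h4 : ((r ^ (-(-(n:ℤ))) : Rˣ) : R) = ((r ^ ((n:ℤ)) : Rˣ):R) := by norm_num
    rw [h2, h3, h4]; ring


lemma rpow_mul_rpow (a b c : ℤ) (h : a + b = c) :
    ((r ^ a : Rˣ) : R) * ((r ^ b : Rˣ) : R) = ((r ^ c : Rˣ) : R) := by
  rw [← h, zpow_add, Units.val_mul]

variable {A : Type*} [Ring A] [Algebra R A]

lemma Apow_add (Ap : Aˣ) (a b : ℤ) :
    ((Ap ^ (a + b) : Aˣ) : A) = ((Ap ^ a : Aˣ) : A) * ((Ap ^ b : Aˣ) : A) := by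
  rw [zpow_add, Units.val_mul]

lemma Apow_mul_Apow (Ap : Aˣ) (a b c : ℤ) (h : a + b = c) :
    ((Ap ^ a : Aˣ) : A) * ((Ap ^ b : Aˣ) : A) = ((Ap ^ c : Aˣ) : A) := by
  rw [← h, Apow_add]

lemma hw_comm (Ap : Aˣ) (Am : A)
    (hrel : (r : R) • (Am * (Ap : A)) - ((r⁻¹ : Rˣ) : R) • ((Ap : A) * Am) = 1) :
    ∀ k : ℤ, Am * ((Ap ^ k : Aˣ) : A)
      = ((r ^ (-2*k) : Rˣ) : R) • (((Ap ^ k : Aˣ) : A) * Am)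
        + (((r ^ (-k) : Rˣ) : R) * zInt r k) • ((Ap ^ (k - 1) : Aˣ) : A) := by
  have hr1 : ((r⁻¹:Rˣ):R) * (r:R) = 1 := by
    rw [← Units.val_mul, inv_mul_cancel, Units.val_one]
  have hz1 : ((r ^ (1:ℤ) : Rˣ) : R) = (r:R) := by norm_num
  have h1 : Am * (Ap : A)
      = ((r ^ (-2:ℤ) : Rˣ) : R) • ((Ap : A) * Am) + ((r ^ (-1:ℤ) : Rˣ) : R) • (1:A) := by
    have h := congrArg (fun x => ((r⁻¹:Rˣ):R) • x) hrel
    simp only [smul_sub, smul_smul, hr1, one_smul] at h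
    have e1 : ((r⁻¹:Rˣ):R) * ((r⁻¹:Rˣ):R) = ((r ^ (-2:ℤ) : Rˣ) : R) := by
      rw [← Units.val_mul]; congr 1; rw [← zpow_neg_one, ← zpow_add]; norm_num
    have e2 : ((r⁻¹:Rˣ):R) = ((r ^ (-1:ℤ) : Rˣ) : R) := by rw [zpow_neg_one]
    rw [e1, e2] at h
    exact sub_eq_iff_eq_add'.mp h
  have hPv : ((Ap ^ (-1:ℤ) : Aˣ) : A) * (Ap : A) = 1 := by
    rw [zpow_neg_one, Units.inv_mul]
  have hvP : (Ap : A) * ((Ap ^ (-1:ℤ) : Aˣ) : A) = 1 := by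
    rw [zpow_neg_one, Units.mul_inv]
  have h1' : Am * ((Ap ^ (-1:ℤ) : Aˣ) : A)
      = ((r ^ (2:ℤ) : Rˣ) : R) • (((Ap ^ (-1:ℤ) : Aˣ) : A) * Am)
        - ((r ^ (1:ℤ) : Rˣ) : R) • ((Ap ^ (-2:ℤ) : Aˣ) : A) := by
    set P : A := ((Ap ^ (-1:ℤ) : Aˣ) : A) with hP
    have hp2 : P * P = ((Ap ^ (-2:ℤ) : Aˣ) : A) := Apow_mul_Apow Ap _ _ _ (by ring)
    have h := congrArg (fun x => P * x * P) h1
    simp only [mul_add, add_mul, mul_smul_comm, smul_mul_assoc, mul_one] at h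
    rw [← mul_assoc, ← mul_assoc] at h
    rw [show P * Am * (Ap:A) * P = P * Am * ((Ap:A) * P) by noncomm_ring] at h
    rw [show P * (Ap:A) * Am * P = (P * (Ap:A)) * (Am * P) by noncomm_ring] at h
    rw [hvP, hPv, mul_one, one_mul, hp2] at h
    -- h : P * Am = r^{-2} • (Am * P) + r^{-1} • ↑(Ap^{-2})
    have h2 := congrArg (fun x => ((r ^ (2:ℤ) : Rˣ) : R) • x) h
    simp only [smul_add, smul_smul] at h2
    rw [rpow_mul_rpow r 2 (-2) 0 (by ring), rpow_mul_rpow r 2 (-1) 1 (by ring)] at h2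
    have hz0 : ((r ^ (0:ℤ) : Rˣ) : R) = 1 := by norm_num
    rw [hz0, one_smul] at h2
    rw [h2]; simp
  intro k
  induction k using Int.induction_on with
  | zero => simp [zInt_zero]
  | succ n ih =>
    have assoc1 : Am * ((Ap ^ ((n:ℤ)+1) : Aˣ) : A)
        = (Am * ((Ap ^ (n:ℤ) : Aˣ) : A)) * (Ap : A) := by
      rw [Apow_add, zpow_one, mul_assoc]
    rw [assoc1, ih, add_mul, smul_mul_assoc, smul_mul_assoc, mul_assoc, h1]
    rw [mul_add, mul_smul_comm, mul_smul_comm, mul_one, ← mul_assoc]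
    rw [smul_add, smul_smul, smul_smul]
    have e3 : ((Ap ^ (n:ℤ) : Aˣ) : A) * (Ap : A) = ((Ap ^ ((n:ℤ)+1) : Aˣ) : A) := by
      rw [Apow_add, zpow_one]
    have e4 : ((Ap ^ ((n:ℤ)-1) : Aˣ) : A) * (Ap : A) = ((Ap ^ (n:ℤ) : Aˣ) : A) := by
      have hv : (Ap : A) = ((Ap ^ (1:ℤ) : Aˣ) : A) := by norm_num
      rw [hv]; exact Apow_mul_Apow Ap _ _ _ (by ring)
    have e5 : ((n:ℤ)+1) - 1 = (n:ℤ) := by ring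
    rw [e3, e4, e5]
    match_scalars
    · linear_combination rpow_mul_rpow r (-2*(n:ℤ)) (-2) (-2*((n:ℤ)+1)) (by ring)
    · rw [zInt_add_one]
      have g1 : ((r ^ (-2*(n:ℤ)) : Rˣ):R) * ((r ^ (-1:ℤ) : Rˣ):R)
          = ((r ^ (-((n:ℤ)+1)) : Rˣ):R) * ((r ^ (-(n:ℤ)) : Rˣ):R) := by
        rw [rpow_mul_rpow r _ _ (-2*(n:ℤ)-1) (by ring),
            rpow_mul_rpow r _ _ (-2*(n:ℤ)-1) (by ring)]
      have g2 : ((r ^ (-((n:ℤ)+1)) : Rˣ):R) * (r:R) = ((r ^ (-(n:ℤ)) : Rˣ):R) := by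
        rw [← hz1]; exact rpow_mul_rpow r _ _ _ (by ring)
      linear_combination g1 - zInt r (n:ℤ) * g2
  | pred n ih =>
    have assoc1 : Am * ((Ap ^ (-(n:ℤ)-1) : Aˣ) : A)
        = (Am * ((Ap ^ (-(n:ℤ)) : Aˣ) : A)) * ((Ap ^ (-1:ℤ) : Aˣ) : A) := by
      rw [show (-(n:ℤ)-1) = (-(n:ℤ)) + (-1:ℤ) by ring, Apow_add, mul_assoc]
    rw [assoc1, ih, add_mul, smul_mul_assoc, smul_mul_assoc, mul_assoc, h1']
    rw [mul_sub, mul_smul_comm, mul_smul_comm]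
    rw [smul_sub, smul_smul, smul_smul, ← mul_assoc]
    have e3 : ((Ap ^ (-(n:ℤ)) : Aˣ) : A) * ((Ap ^ (-1:ℤ) : Aˣ) : A)
        = ((Ap ^ (-(n:ℤ)-1) : Aˣ) : A) := Apow_mul_Apow Ap _ _ _ (by ring)
    have e4 : ((Ap ^ (-(n:ℤ)) : Aˣ) : A) * ((Ap ^ (-2:ℤ) : Aˣ) : A)
        = ((Ap ^ (-(n:ℤ)-1-1) : Aˣ) : A) := Apow_mul_Apow Ap _ _ _ (by ring)
    have e5 : ((Ap ^ (-(n:ℤ)-1) : Aˣ) : A) * ((Ap ^ (-1:ℤ) : Aˣ) : A)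
        = ((Ap ^ (-(n:ℤ)-1-1) : Aˣ) : A) := Apow_mul_Apow Ap _ _ _ (by ring)
    rw [e3, e4, e5]
    match_scalars
    · linear_combination rpow_mul_rpow r (-2*(-(n:ℤ))) 2 (-2*(-(n:ℤ)-1)) (by ring)
    · rw [zInt_sub_one, hz1]
      have hrr : ((r ^ (-(-(n:ℤ)-1)) : Rˣ):R) * ((r⁻¹:Rˣ):R) = ((r ^ (- -(n:ℤ)) : Rˣ):R) := by
        rw [show ((r⁻¹:Rˣ):R) = ((r ^ (-1:ℤ) : Rˣ):R) by rw [zpow_neg_one]]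
        exact rpow_mul_rpow r _ _ _ (by ring)
      have g2a : ((r ^ (-(-(n:ℤ)-1)) : Rˣ):R) * ((r ^ (- -(n:ℤ)) : Rˣ):R)
          = ((r ^ (-2*(-(n:ℤ))+1) : Rˣ):R) := rpow_mul_rpow r _ _ _ (by ring)
      have g2b : ((r ^ (-2*(-(n:ℤ))) : Rˣ):R) * (r:R) = ((r ^ (-2*(-(n:ℤ))+1) : Rˣ):R) := by
        rw [← hz1]; exact rpow_mul_rpow r _ _ _ (by ring)
      linear_combination (- zInt r (-(n:ℤ))) * hrr + g2a - g2b

lemma zInt_cross (a b : ℤ) :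
    ((r ^ (-a) : Rˣ) : R) * zInt r b - ((r ^ (-b) : Rˣ) : R) * zInt r a
      = zInt r (b - a) := by
  have h := zInt_add r b (-a)
  rw [zInt_neg, show b + -a = b - a by ring] at h
  linear_combination -h

end Aux

/-- the elements `L_m = -A₊^{1+m}·A₋` satisfy the `r`-Witt
(deformed centreless Virasoro) relations
`r^{n-m}·L_m·L_n - r^{m-n}·L_n·L_m = [m-n]_r·L_{m+n}`. -/
theorem r_witt_realisation
    {R A : Type*} [CommRing R] [Ring A] [Algebra R A]
    (r : Rˣ) (Ap : Aˣ) (Am : A)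
    (hrel : (r : R) • (Am * (Ap : A)) - ((r⁻¹ : Rˣ) : R) • ((Ap : A) * Am) = 1) :
    ∀ m n : ℤ,
      ((r ^ (n - m) : Rˣ) : R) • (wittL Ap Am m * wittL Ap Am n)
        - ((r ^ (m - n) : Rˣ) : R) • (wittL Ap Am n * wittL Ap Am m)
      = zInt r (m - n) • wittL Ap Am (m + n) := by
  have key := hw_comm r Ap Am hrel
  have hexp : ∀ m n : ℤ, wittL Ap Am m * wittL Ap Am n
      = ((r ^ (-2*(1+n)) : Rˣ) : R) • (((Ap ^ (2+(m+n)) : Aˣ) : A) * (Am * Am))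
        + (((r ^ (-(1+n)) : Rˣ) : R) * zInt r (1+n)) • (((Ap ^ (1+(m+n)) : Aˣ) : A) * Am) := by
    intro m n
    show (-(((Ap ^ (1+m) : Aˣ) : A) * Am)) * (-(((Ap ^ (1+n) : Aˣ) : A) * Am)) = _
    rw [neg_mul_neg]
    rw [show (((Ap ^ (1+m) : Aˣ) : A) * Am) * (((Ap ^ (1+n) : Aˣ) : A) * Am)
        = ((Ap ^ (1+m) : Aˣ) : A) * ((Am * ((Ap ^ (1+n) : Aˣ) : A)) * Am) by noncomm_ring]
    rw [key (1+n)]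
    rw [show ((Ap ^ (2+(m+n)) : Aˣ) : A) = ((Ap ^ (1+m) : Aˣ) : A) * ((Ap ^ (1+n) : Aˣ) : A)
        from (Apow_mul_Apow Ap _ _ _ (by ring)).symm]
    rw [show ((Ap ^ (1+(m+n)) : Aˣ) : A) = ((Ap ^ (1+m) : Aˣ) : A) * ((Ap ^ ((1+n)-1) : Aˣ) : A)
        from (Apow_mul_Apow Ap _ _ _ (by ring)).symm]
    simp only [mul_add, add_mul, mul_smul_comm, smul_mul_assoc, mul_assoc]
  intro m n
  rw [hexp m n, hexp n m]
  rw [show (2+(n+m)) = (2+(m+n)) by ring, show (1+(n+m)) = (1+(m+n)) by ring]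
  show _ = zInt r (m - n) • (-(((Ap ^ (1+(m+n)) : Aˣ) : A) * Am))
  have p1 := rpow_mul_rpow r (n-m) (-(1+n)) (-(1+m)) (by ring)
  have p2 := rpow_mul_rpow r (m-n) (-(1+m)) (-(1+n)) (by ring)
  have hk := zInt_cross r (1+m) (1+n)
  have hn2 : zInt r ((1+n) - (1+m)) = - zInt r (m - n) := by
    rw [show (1+n) - (1+m) = -(m-n) by ring, zInt_neg]
  match_scalars
  · linear_combination rpow_mul_rpow r (n-m) (-2*(1+n)) (-(m+n)-2) (by ring)
      - rpow_mul_rpow r (m-n) (-2*(1+m)) (-(m+n)-2) (by ring)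
  · linear_combination zInt r (1+n) * p1 - zInt r (1+m) * p2 + hk + hn2
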